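/- Let z ∈ ℂ \ {0}, let x₀, x₁ be integers with 0 < x₀ < x₁, and let C⁰, C¹, C² be 2×2 complex matrices with nonzero (1,1) entries. Then the first column of the matrix C⁰₁₁ · C¹₁₁ · C²₁₁ · 𝒯_z(C²) · D_z^{x₁−x₀−1} · 𝒯_z(C¹) · D_z^{x₀−1} · 𝒯_z(C⁰) equals the vector (𝚊(z), 𝚋(z)), where 𝚊(z) = z^{x₁+1} − C¹₂₁C²₁₂ z^{2x₀−x₁+1} − C⁰₂₁C¹₁₂ z^{x₁−2x₀+1} − C⁰₂₁C²₁₂ (det C¹) z^{−x₁+1} and 𝚋(z) = C²₂₁ z^{x₁} + C¹₂₁ (det C²) z^{2x₀−x₁} − C⁰₂₁C¹₁₂C²₂₁ z^{x₁−2x₀} + C⁰₂₁ (det C¹)(det C²) z^{−x₁}. -/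

import Mathlib

open Matrix

/-- The transfer matrix `𝒯_z(C) = C₁₁⁻¹ [[z, -C₁₂],[C₂₁, z⁻¹ det C]]`. -/
noncomputable def transferMatrix (z : ℂ) (C : Matrix (Fin 2) (Fin 2) ℂ) :
    Matrix (Fin 2) (Fin 2) ℂ :=
  (C 0 0)⁻¹ • !![z, -C 0 1; C 1 0, z⁻¹ * C.det]

/-- The free transfer matrix `D_z = [[z, 0],[0, z⁻¹]]`. -/
noncomputable def freeTransfer (z : ℂ) : Matrix (Fin 2) (Fin 2) ℂ := !![z, 0; 0, z⁻¹]

lemma freeTransfer_pow (z : ℂ) (n : ℕ) :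
    freeTransfer z ^ n = !![z ^ n, 0; 0, z⁻¹ ^ n] := by
  induction n with
  | zero => simp [Matrix.one_fin_two]
  | succ n ih =>
    rw [pow_succ, ih, freeTransfer]
    ext i j
    fin_cases i <;> fin_cases j <;> simp [Matrix.mul_apply, Fin.sum_univ_two] <;> ring

lemma key_zpow (z : ℂ) (hz : z ≠ 0) (p q : ℕ) :
    z ^ ((p : ℤ) - (q : ℤ)) = z ^ p * (z⁻¹) ^ q := by
  rw [zpow_sub₀ hz, zpow_natCast, zpow_natCast, div_eq_mul_inv, inv_pow]

lemma smul_prod (z : ℂ) (C0 C1 C2 A B : Matrix (Fin 2) (Fin 2) ℂ) :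
    transferMatrix z C2 * A * transferMatrix z C1 * B * transferMatrix z C0
      = ((C0 0 0)⁻¹ * (C1 0 0)⁻¹ * (C2 0 0)⁻¹) •
        (!![z, -C2 0 1; C2 1 0, z⁻¹ * C2.det] * A * !![z, -C1 0 1; C1 1 0, z⁻¹ * C1.det] * B *
          !![z, -C0 0 1; C0 1 0, z⁻¹ * C0.det]) := by
  simp only [transferMatrix, Matrix.smul_mul, Matrix.mul_smul, smul_smul]
  congr 1
  ring

/-- The first column of the transfer-matrix product for the triple barrier quantum walk:
`C⁰₁₁C¹₁₁C²₁₁ · 𝒯_z(C²) D_z^{x₁-x₀-1} 𝒯_z(C¹) D_z^{x₀-1} 𝒯_z(C⁰)` has first column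
`(𝚊(z), 𝚋(z))` with the explicit amplitudes below. -/
theorem stmt10 (z : ℂ) (hz : z ≠ 0) (x₀ x₁ : ℕ) (h0 : 0 < x₀) (h01 : x₀ < x₁)
    (C0 C1 C2 : Matrix (Fin 2) (Fin 2) ℂ)
    (h0' : C0 0 0 ≠ 0) (h1' : C1 0 0 ≠ 0) (h2' : C2 0 0 ≠ 0) :
    ((C0 0 0 * C1 0 0 * C2 0 0) •
        (transferMatrix z C2 * freeTransfer z ^ (x₁ - x₀ - 1) * transferMatrix z C1 *
          freeTransfer z ^ (x₀ - 1) * transferMatrix z C0)) 0 0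
      = z ^ ((x₁ : ℤ) + 1) - C1 1 0 * C2 0 1 * z ^ (2 * (x₀ : ℤ) - (x₁ : ℤ) + 1)
          - C0 1 0 * C1 0 1 * z ^ ((x₁ : ℤ) - 2 * (x₀ : ℤ) + 1)
          - C0 1 0 * C2 0 1 * C1.det * z ^ (-(x₁ : ℤ) + 1)
    ∧ ((C0 0 0 * C1 0 0 * C2 0 0) •
        (transferMatrix z C2 * freeTransfer z ^ (x₁ - x₀ - 1) * transferMatrix z C1 *
          freeTransfer z ^ (x₀ - 1) * transferMatrix z C0)) 1 0
      = C2 1 0 * z ^ (x₁ : ℤ) + C1 1 0 * C2.det * z ^ (2 * (x₀ : ℤ) - (x₁ : ℤ))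
          - C0 1 0 * C1 0 1 * C2 1 0 * z ^ ((x₁ : ℤ) - 2 * (x₀ : ℤ))
          + C0 1 0 * C1.det * C2.det * z ^ (-(x₁ : ℤ)) := by
  obtain ⟨a, rfl⟩ : ∃ a, x₀ = a + 1 := ⟨x₀ - 1, by omega⟩
  obtain ⟨b, rfl⟩ : ∃ b, x₁ = a + b + 2 := ⟨x₁ - a - 2, by omega⟩
  have h1 : a + b + 2 - (a + 1) - 1 = b := by omega
  have h2 : a + 1 - 1 = a := by omega
  have hs : (C0 0 0 * C1 0 0 * C2 0 0) * ((C0 0 0)⁻¹ * (C1 0 0)⁻¹ * (C2 0 0)⁻¹) = 1 := by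
    field_simp [hz]
  have F1 : z ^ ((((a + b + 2 : ℕ) : ℤ)) + 1) = z ^ (a + b + 3) * (z⁻¹) ^ 0 := by
    rw [show ((((a + b + 2 : ℕ) : ℤ)) + 1) = ((a + b + 3 : ℕ) : ℤ) - ((0 : ℕ) : ℤ) from by
      push_cast; ring, key_zpow z hz]
  have F2 : z ^ (2 * (((a + 1 : ℕ)) : ℤ) - ((a + b + 2 : ℕ) : ℤ) + 1)
      = z ^ (a + 1) * (z⁻¹) ^ b := by
    rw [show (2 * (((a + 1 : ℕ)) : ℤ) - ((a + b + 2 : ℕ) : ℤ) + 1)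
      = ((a + 1 : ℕ) : ℤ) - ((b : ℕ) : ℤ) from by push_cast; ring, key_zpow z hz]
  have F3 : z ^ ((((a + b + 2 : ℕ)) : ℤ) - 2 * ((a + 1 : ℕ) : ℤ) + 1)
      = z ^ (b + 1) * (z⁻¹) ^ a := by
    rw [show ((((a + b + 2 : ℕ)) : ℤ) - 2 * ((a + 1 : ℕ) : ℤ) + 1)
      = ((b + 1 : ℕ) : ℤ) - ((a : ℕ) : ℤ) from by push_cast; ring, key_zpow z hz]
  have F4 : z ^ (-(((a + b + 2 : ℕ)) : ℤ) + 1) = z ^ 0 * (z⁻¹) ^ (a + b + 1) := by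
    rw [show (-(((a + b + 2 : ℕ)) : ℤ) + 1) = ((0 : ℕ) : ℤ) - ((a + b + 1 : ℕ) : ℤ) from by
      push_cast; ring, key_zpow z hz]
  have F5 : z ^ ((((a + b + 2 : ℕ)) : ℤ)) = z ^ (a + b + 2) * (z⁻¹) ^ 0 := by
    rw [show ((((a + b + 2 : ℕ)) : ℤ)) = ((a + b + 2 : ℕ) : ℤ) - ((0 : ℕ) : ℤ) from by
      push_cast; ring, key_zpow z hz]
  have F6 : z ^ (2 * (((a + 1 : ℕ)) : ℤ) - ((a + b + 2 : ℕ) : ℤ)) = z ^ a * (z⁻¹) ^ b := by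
    rw [show (2 * (((a + 1 : ℕ)) : ℤ) - ((a + b + 2 : ℕ) : ℤ))
      = ((a : ℕ) : ℤ) - ((b : ℕ) : ℤ) from by push_cast; ring, key_zpow z hz]
  have F7 : z ^ ((((a + b + 2 : ℕ)) : ℤ) - 2 * ((a + 1 : ℕ) : ℤ)) = z ^ b * (z⁻¹) ^ a := by
    rw [show ((((a + b + 2 : ℕ)) : ℤ) - 2 * ((a + 1 : ℕ) : ℤ))
      = ((b : ℕ) : ℤ) - ((a : ℕ) : ℤ) from by push_cast; ring, key_zpow z hz]
  have F8 : z ^ (-(((a + b + 2 : ℕ)) : ℤ)) = z ^ 0 * (z⁻¹) ^ (a + b + 2) := by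
    rw [show (-(((a + b + 2 : ℕ)) : ℤ)) = ((0 : ℕ) : ℤ) - ((a + b + 2 : ℕ) : ℤ) from by
      push_cast; ring, key_zpow z hz]
  rw [h1, h2, freeTransfer_pow, freeTransfer_pow, smul_prod, smul_smul, hs, one_smul]
  constructor
  · rw [F1, F2, F3, F4]
    simp only [Matrix.mul_apply, Fin.sum_univ_two, Matrix.det_fin_two]
    simp [inv_pow]
    field_simp [hz]
    ring
  · rw [F5, F6, F7, F8]
    simp only [Matrix.mul_apply, Fin.sum_univ_two, Matrix.det_fin_two]
    simp [inv_pow]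
    field_simp [hz]
    ring
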